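/- Let p ≥ 3 be a prime and let G_e = ⟨a, b, c⟩ be the EGS-group defined by a non-zero vector e = (e_1,…,e_{p−1}) ∈ (Z/pZ)^{p−1}. Then G_e is a contracting group with nucleus N_e = {1} ∪ {a^i : 1 ≤ i ≤ p−1} ∪ {b^j : 1 ≤ j ≤ p−1} ∪ {c^k : 1 ≤ k ≤ p−1}, and |N_e| = 3p − 2. -/

import Mathlib

/-- An automorphism of the rooted `p`-ary tree, encoded by its portrait:
at every vertex (a finite word over `Fin p`) it records the permutation of the
`p` subtrees hanging at that vertex. -/
@[ext]
structure TreeAut (p : ℕ) where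
  perm : List (Fin p) → Equiv.Perm (Fin p)

namespace TreeAut

variable {p : ℕ}

/-- The section of a tree automorphism at a first-level vertex `x`. -/
def sect (g : TreeAut p) (x : Fin p) : TreeAut p := ⟨fun v => g.perm (x :: v)⟩

/-- The section of a tree automorphism at an arbitrary vertex. -/
def sectV (g : TreeAut p) : List (Fin p) → TreeAut p
  | [] => g
  | x :: v => (g.sect x).sectV v

/-- The action of a tree automorphism on vertices (finite words over `Fin p`). -/
def act (g : TreeAut p) : List (Fin p) → List (Fin p)
  | [] => []
  | x :: v => g.perm [] x :: (g.sect x).act v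

/-- The inverse of the action of a tree automorphism on vertices. -/
def actInv (g : TreeAut p) : List (Fin p) → List (Fin p)
  | [] => []
  | x :: v => (g.perm []).symm x :: (g.sect ((g.perm []).symm x)).actInv v

instance : One (TreeAut p) := ⟨⟨fun _ => 1⟩⟩

/-- Composition convention as in the paper: `g * h` acts by `g` first, then `h`. -/
instance : Mul (TreeAut p) := ⟨fun g h => ⟨fun v => (g.perm v).trans (h.perm (g.act v))⟩⟩

instance : Inv (TreeAut p) := ⟨fun g => ⟨fun v => (g.perm (g.actInv v)).symm⟩⟩

theorem perm_one (v : List (Fin p)) : (1 : TreeAut p).perm v = 1 := rfl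

theorem perm_mul (g h : TreeAut p) (v : List (Fin p)) :
    (g * h).perm v = (g.perm v).trans (h.perm (g.act v)) := rfl

theorem perm_inv (g : TreeAut p) (v : List (Fin p)) :
    (g⁻¹).perm v = (g.perm (g.actInv v)).symm := rfl

theorem sect_one (x : Fin p) : (1 : TreeAut p).sect x = 1 := rfl

theorem sect_mul (g h : TreeAut p) (x : Fin p) :
    (g * h).sect x = g.sect x * h.sect (g.perm [] x) := rfl

theorem sect_inv (g : TreeAut p) (x : Fin p) :
    (g⁻¹).sect x = (g.sect ((g.perm []).symm x))⁻¹ := rfl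

theorem act_one : ∀ v : List (Fin p), (1 : TreeAut p).act v = v
  | [] => rfl
  | x :: v => by
    show (1 : Equiv.Perm (Fin p)) x :: ((1 : TreeAut p).sect x).act v = x :: v
    rw [sect_one, act_one v]
    rfl

theorem act_mul : ∀ (v : List (Fin p)) (g h : TreeAut p), (g * h).act v = h.act (g.act v)
  | [], _, _ => rfl
  | x :: v, g, h => by
    show (g * h).perm [] x :: ((g * h).sect x).act v = _
    rw [sect_mul, act_mul v]
    rfl

theorem act_inv : ∀ (v : List (Fin p)) (g : TreeAut p), (g⁻¹).act v = g.actInv v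
  | [], _ => rfl
  | x :: v, g => by
    show (g⁻¹).perm [] x :: ((g⁻¹).sect x).act v = _
    rw [sect_inv, act_inv v]
    rfl

instance : Group (TreeAut p) where
  mul_assoc g h k := by
    ext v y
    simp [perm_mul, act_mul, Equiv.trans_apply]
  one_mul g := by
    ext v y
    simp [perm_mul, perm_one, act_one]
  mul_one g := by
    ext v y
    simp [perm_mul, perm_one]
  inv_mul_cancel g := by
    ext v y
    simp [perm_mul, perm_inv, perm_one, act_inv]

end TreeAut

/-- The rooted automorphism `a = (1,…,1)ε`, where `ε = (0 1 … p-1)` is the cyclic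
rotation `x ↦ x + 1` of `Fin p`. -/
def rot (p : ℕ) [NeZero p] : TreeAut p :=
  ⟨fun v => if v = [] then Equiv.addRight (1 : Fin p) else 1⟩

/-- The components of a defining vector `v ∈ (ℤ/pℤ)^{p-1}`, read `p`-periodically:
for `1 ≤ n ≤ p-1`, `vcomp v n` is the `n`-th component of `v` (and `vcomp v n = 0`
when `n ≡ 0 mod p`). -/
def vcomp {p : ℕ} [NeZero p] (v : Fin (p - 1) → ZMod p) (n : ℕ) : ZMod p :=
  if h : n % p = 0 then 0
  else v ⟨n % p - 1, by
    have h2 : n % p < p := Nat.mod_lt _ (Nat.pos_of_ne_zero (NeZero.ne p))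
    omega⟩

/-- `N` is a quasinucleus with constant `k` for the self-similar group generated by the
symmetric set `S`: all sections at level `k` of products of two elements of `S ∪ N` lie in `N`. -/
def IsQuasiNucleusWith (p : ℕ) (S N : Set (TreeAut p)) (k : ℕ) : Prop :=
  ∀ n₁ ∈ S ∪ N, ∀ n₂ ∈ S ∪ N, ∀ v : List (Fin p), v.length = k → (n₁ * n₂).sectV v ∈ N

/-- `N` is the nucleus of the group `G` with symmetric generating set `S`:
`N` is the inclusion-minimal finite subset of `G` that is a quasinucleus for some
level constant `k ≥ 1`. -/
def IsNucleusOf (p : ℕ) (S : Set (TreeAut p)) (G : Subgroup (TreeAut p)) (N : Set (TreeAut p)) : Prop :=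
  (N ⊆ (G : Set (TreeAut p)) ∧ N.Finite ∧ ∃ k, 1 ≤ k ∧ IsQuasiNucleusWith p S N k) ∧
  ∀ N' : Set (TreeAut p), N' ⊆ (G : Set (TreeAut p)) → N'.Finite →
    (∃ k, 1 ≤ k ∧ IsQuasiNucleusWith p S N' k) → N ⊆ N'
open Fin.NatCast in
/-- The defining wreath recursions of the generators `b, c` of the EGS-group defined
by a non-zero vector `e ∈ (ℤ/pℤ)^{p-1}` (Lean's `n : Fin (p-1)` is the paper's
`n = n.val + 1`): `b = (a^{e_1},…,a^{e_{p-1}},b)` and `c = (c,a^{e_1},…,a^{e_{p-1}})`,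
i.e. `b` and `c` fix all first-level vertices, `b|_{n-1} = a^{e_n}`, `b|_{p-1} = b`,
`c|_0 = c`, and `c|_n = a^{e_n}` for `1 ≤ n ≤ p-1`. -/
def IsEGSDatum (p : ℕ) [NeZero p]
    (e : Fin (p - 1) → ZMod p) (b c : TreeAut p) : Prop :=
  e ≠ 0 ∧
  (∀ x : Fin p, b.act [x] = [x]) ∧
  b.sect (((p - 1 : ℕ) : Fin p)) = b ∧
  (∀ n : Fin (p - 1), b.sect ((n.val : ℕ) : Fin p) = rot p ^ (e n).val) ∧
  (∀ x : Fin p, c.act [x] = [x]) ∧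
  c.sect 0 = c ∧
  (∀ n : Fin (p - 1), c.sect ((n.val + 1 : ℕ) : Fin p) = rot p ^ (e n).val)

/-- The EGS-group `G_e = ⟨a, b, c⟩`. -/
def EGSGroup (p : ℕ) [NeZero p] (b c : TreeAut p) : Subgroup (TreeAut p) :=
  Subgroup.closure {rot p, b, c}

theorem rot_mem_EGS (p : ℕ) [NeZero p] (b c : TreeAut p) : rot p ∈ EGSGroup p b c :=
  Subgroup.subset_closure (by simp)

theorem b_mem_EGS (p : ℕ) [NeZero p] (b c : TreeAut p) : b ∈ EGSGroup p b c :=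
  Subgroup.subset_closure (by simp)

theorem c_mem_EGS (p : ℕ) [NeZero p] (b c : TreeAut p) : c ∈ EGSGroup p b c :=
  Subgroup.subset_closure (by simp)

section EGSAux

open TreeAut
open Fin.NatCast

variable {p : ℕ}

theorem perm_cons (g : TreeAut p) (x : Fin p) (v : List (Fin p)) :
    g.perm (x :: v) = (g.sect x).perm v := rfl

theorem treeAut_ext {g h : TreeAut p} (H : ∀ v, g.perm v = h.perm v) : g = h :=
  TreeAut.ext (funext H)

theorem act_nil (g : TreeAut p) : g.act [] = [] := rfl

theorem eq_one_of_perm (g : TreeAut p) (h0 : g.perm [] = 1) (hs : ∀ x, g.sect x = 1) :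
    g = 1 := by
  apply treeAut_ext
  intro v
  cases v with
  | nil => rw [h0]; rfl
  | cons x v => rw [perm_cons, hs, perm_one, perm_one]

theorem perm_nil_mul (g h : TreeAut p) : (g * h).perm [] = (g.perm []).trans (h.perm []) := by
  rw [perm_mul, act_nil]

theorem perm_nil_pow (g : TreeAut p) (h0 : g.perm [] = 1) (n : ℕ) : (g ^ n).perm [] = 1 := by
  induction n with
  | zero => rfl
  | succ n ih => rw [pow_succ, perm_nil_mul, ih, h0]; rfl

theorem sect_pow (g : TreeAut p) (h0 : g.perm [] = 1) (x : Fin p) (n : ℕ) :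
    (g ^ n).sect x = (g.sect x) ^ n := by
  induction n with
  | zero => rw [pow_zero, pow_zero, sect_one]
  | succ n ih =>
    rw [pow_succ, sect_mul, ih, perm_nil_pow g h0, pow_succ]
    rfl

theorem rot_perm_nil [NeZero p] : (rot p).perm [] = Equiv.addRight (1 : Fin p) := rfl

theorem rot_sect [NeZero p] (x : Fin p) : (rot p).sect x = 1 := by
  apply treeAut_ext
  intro v
  show (if x :: v = [] then Equiv.addRight (1 : Fin p) else 1) = _
  rw [if_neg (List.cons_ne_nil x v), perm_one]

theorem rot_pow_sect [NeZero p] (n : ℕ) (x : Fin p) : ((rot p) ^ n).sect x = 1 := by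
  induction n with
  | zero => rw [pow_zero, sect_one]
  | succ n ih => rw [pow_succ, sect_mul, ih, rot_sect, one_mul]

theorem rot_pow_perm_nil [NeZero p] (n : ℕ) :
    ((rot p) ^ n).perm [] = Equiv.addRight ((n : Fin p)) := by
  induction n with
  | zero => apply Equiv.ext; intro x; simp; rfl
  | succ n ih =>
    rw [pow_succ, perm_nil_mul, ih, rot_perm_nil]
    apply Equiv.ext; intro x
    simp [add_assoc]

theorem rot_pow_p [NeZero p] : (rot p) ^ p = 1 := by
  apply eq_one_of_perm
  · rw [rot_pow_perm_nil]
    apply Equiv.ext; intro x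
    simp
  · exact rot_pow_sect p

theorem rot_pow_mod [NeZero p] (n : ℕ) : (rot p) ^ n = (rot p) ^ (n % p) := by
  conv_lhs => rw [← Nat.div_add_mod n p, pow_add, pow_mul, rot_pow_p, one_pow, one_mul]

theorem rot_pow_inj [NeZero p] {s t : ℕ} (h : (rot p) ^ s = (rot p) ^ t) :
    (s : ZMod p) = (t : ZMod p) := by
  have h2 := congrArg (fun g : TreeAut p => g.perm [] 0) h
  simp only [rot_pow_perm_nil, Equiv.coe_addRight, zero_add] at h2
  have h3 : s % p = t % p := by
    have := congrArg Fin.val h2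
    rwa [Fin.val_natCast, Fin.val_natCast] at this
  rwa [ZMod.natCast_eq_natCast_iff]

theorem rot_pow_eq_iff [NeZero p] (s t : ℕ) :
    (rot p) ^ s = (rot p) ^ t ↔ (s : ZMod p) = (t : ZMod p) := by
  constructor
  · exact rot_pow_inj
  · intro h
    rw [ZMod.natCast_eq_natCast_iff] at h
    rw [rot_pow_mod, rot_pow_mod t, h]

theorem pow_mod_of_pow_eq_one {g : TreeAut p} (hg : g ^ p = 1) (n : ℕ) :
    g ^ n = g ^ (n % p) := by
  conv_lhs => rw [← Nat.div_add_mod n p, pow_add, pow_mul, hg, one_pow, one_mul]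

theorem sectV_one : ∀ v : List (Fin p), (1 : TreeAut p).sectV v = 1
  | [] => rfl
  | x :: v => by rw [show (1 : TreeAut p).sectV (x :: v) = ((1 : TreeAut p).sect x).sectV v from rfl,
      sect_one, sectV_one v]

theorem sectV_cons (g : TreeAut p) (x : Fin p) (v : List (Fin p)) :
    g.sectV (x :: v) = (g.sect x).sectV v := rfl

theorem sectV_replicate (g : TreeAut p) (x : Fin p) (hx : g.sect x = g) :
    ∀ m, g.sectV (List.replicate m x) = g
  | 0 => rfl
  | m + 1 => by
    rw [List.replicate_succ, sectV_cons, hx, sectV_replicate g x hx m]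

theorem sectV_append (g : TreeAut p) : ∀ (u v : List (Fin p)),
    g.sectV (u ++ v) = (g.sectV u).sectV v := by
  intro u
  induction u generalizing g with
  | nil => intro v; rfl
  | cons x u ih => intro v; rw [List.cons_append, sectV_cons, sectV_cons, ih]

end EGSAux

set_option linter.unusedSectionVars false

section EGSMain

open TreeAut
open Fin.NatCast

variable {p : ℕ} [Fact p.Prime] [NeZero p] (hp3 : 3 ≤ p)
  {e : Fin (p - 1) → ZMod p} {b c : TreeAut p}

/-- membership in the candidate nucleus, in convenient form -/
def InN (p : ℕ) [NeZero p] (b c g : TreeAut p) : Prop :=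
  ∃ i : ℕ, g = rot p ^ i ∨ g = b ^ i ∨ g = c ^ i

namespace EGSProof

variable (hd : IsEGSDatum p e b c)
include hd

theorem b_perm_nil : b.perm [] = 1 := by
  apply Equiv.ext; intro x
  have := hd.2.1 x
  have h2 : b.act [x] = [b.perm [] x] := rfl
  rw [h2] at this
  simpa using this

theorem c_perm_nil : c.perm [] = 1 := by
  apply Equiv.ext; intro x
  have := hd.2.2.2.2.1 x
  have h2 : c.act [x] = [c.perm [] x] := rfl
  rw [h2] at this
  simpa using this

theorem b_sect_last : b.sect (((p - 1 : ℕ) : Fin p)) = b := hd.2.2.1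

theorem c_sect_zero : c.sect 0 = c := hd.2.2.2.2.2.1

theorem b_sect_of_ne (x : Fin p) (hx : x ≠ (((p - 1 : ℕ) : Fin p))) :
    ∃ m : ℕ, b.sect x = rot p ^ m := by
  have hp1 : p - 1 < p := by omega
  have hxv : x.val ≠ p - 1 := by
    intro h
    apply hx
    apply Fin.ext
    rw [Fin.val_natCast, Nat.mod_eq_of_lt hp1, h]
  have hxlt : x.val < p - 1 := by
    have := x.isLt
    omega
  refine ⟨(e ⟨x.val, hxlt⟩).val, ?_⟩
  have := hd.2.2.2.1 ⟨x.val, hxlt⟩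
  have hxx : ((x.val : ℕ) : Fin p) = x := by
    apply Fin.ext
    rw [Fin.val_natCast, Nat.mod_eq_of_lt x.isLt]
  rwa [hxx] at this

theorem c_sect_of_ne (x : Fin p) (hx : x ≠ 0) :
    ∃ m : ℕ, c.sect x = rot p ^ m := by
  have hxv : 1 ≤ x.val := by
    rcases Nat.eq_zero_or_pos x.val with h | h
    · exact absurd (Fin.ext h) hx
    · omega
  have hxlt : x.val - 1 < p - 1 := by
    have := x.isLt
    omega
  refine ⟨(e ⟨x.val - 1, hxlt⟩).val, ?_⟩
  have := hd.2.2.2.2.2.2 ⟨x.val - 1, hxlt⟩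
  have hxx : ((x.val - 1 + 1 : ℕ) : Fin p) = x := by
    apply Fin.ext
    rw [Fin.val_natCast]
    have : x.val - 1 + 1 = x.val := by omega
    rw [this, Nat.mod_eq_of_lt x.isLt]
  rwa [hxx] at this

theorem b_pow_sect (i : ℕ) (x : Fin p) : (b ^ i).sect x = (b.sect x) ^ i :=
  sect_pow b (b_perm_nil hd) x i

theorem c_pow_sect (i : ℕ) (x : Fin p) : (c ^ i).sect x = (c.sect x) ^ i :=
  sect_pow c (c_perm_nil hd) x i

theorem b_pow_p : b ^ p = 1 := by
  have key : ∀ v : List (Fin p), (b ^ p).perm v = 1 := by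
    intro v
    induction v with
    | nil => exact perm_nil_pow b (b_perm_nil hd) p
    | cons x v ih =>
      rw [perm_cons, b_pow_sect hd]
      by_cases hx : x = (((p - 1 : ℕ) : Fin p))
      · rw [hx, b_sect_last hd]
        exact ih
      · obtain ⟨m, hm⟩ := b_sect_of_ne hd x hx
        rw [hm, ← pow_mul, rot_pow_mod, Nat.mul_mod_left, pow_zero, perm_one]
  exact treeAut_ext fun v => by rw [key, perm_one]

theorem c_pow_p : c ^ p = 1 := by
  have key : ∀ v : List (Fin p), (c ^ p).perm v = 1 := by
    intro v
    induction v with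
    | nil => exact perm_nil_pow c (c_perm_nil hd) p
    | cons x v ih =>
      rw [perm_cons, c_pow_sect hd]
      by_cases hx : x = 0
      · rw [hx, c_sect_zero hd]
        exact ih
      · obtain ⟨m, hm⟩ := c_sect_of_ne hd x hx
        rw [hm, ← pow_mul, rot_pow_mod, Nat.mul_mod_left, pow_zero, perm_one]
  exact treeAut_ext fun v => by rw [key, perm_one]


omit hd in
theorem inN_rot (m : ℕ) : InN p b c (rot p ^ m) := ⟨m, Or.inl rfl⟩

omit hd in
theorem inN_b (m : ℕ) : InN p b c (b ^ m) := ⟨m, Or.inr (Or.inl rfl)⟩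

omit hd in
theorem inN_c (m : ℕ) : InN p b c (c ^ m) := ⟨m, Or.inr (Or.inr rfl)⟩

omit hd in
theorem inN_one : InN p b c 1 := by
  refine ⟨0, Or.inl ?_⟩; rw [pow_zero]

omit hd in
theorem last_val (hp3 : 3 ≤ p) : ((p - 1 : ℕ) : Fin p).val = p - 1 := by
  rw [Fin.val_natCast]
  exact Nat.mod_eq_of_lt (by omega)

omit hd in
theorem last_ne_zero (hp3 : 3 ≤ p) : ((p - 1 : ℕ) : Fin p) ≠ 0 := by
  intro h
  have := congrArg Fin.val h
  rw [last_val hp3] at this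
  simp at this
  omega

omit hd in
theorem zero_ne_last (hp3 : 3 ≤ p) : (0 : Fin p) ≠ ((p - 1 : ℕ) : Fin p) :=
  fun h => last_ne_zero hp3 h.symm

theorem inN_sect (g : TreeAut p) (hg : InN p b c g) (x : Fin p) :
    InN p b c (g.sect x) := by
  obtain ⟨i, rfl | rfl | rfl⟩ := hg
  · refine ⟨0, Or.inl ?_⟩
    rw [rot_pow_sect, pow_zero]
  · rw [b_pow_sect hd]
    by_cases hx : x = ((p - 1 : ℕ) : Fin p)
    · rw [hx, b_sect_last hd]; exact inN_b i
    · obtain ⟨m, hm⟩ := b_sect_of_ne hd x hx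
      rw [hm, ← pow_mul]; exact inN_rot (m * i)
  · rw [c_pow_sect hd]
    by_cases hx : x = 0
    · rw [hx, c_sect_zero hd]; exact inN_c i
    · obtain ⟨m, hm⟩ := c_sect_of_ne hd x hx
      rw [hm, ← pow_mul]; exact inN_rot (m * i)

omit hd in
theorem sect_mul_rot (u : TreeAut p) (m : ℕ) (x : Fin p) :
    (u * rot p ^ m).sect x = u.sect x := by
  rw [sect_mul, rot_pow_sect, mul_one]

omit hd in
theorem sect_rot_mul (m : ℕ) (u : TreeAut p) (x : Fin p) :
    ∃ z, (rot p ^ m * u).sect x = u.sect z :=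
  ⟨(rot p ^ m).perm [] x, by rw [sect_mul, rot_pow_sect, one_mul]⟩

omit hd in
theorem sect_mul_of_fix (u w : TreeAut p) (hu : u.perm [] = 1) (x : Fin p) :
    (u * w).sect x = u.sect x * w.sect x := by
  rw [sect_mul, hu]
  rfl

theorem key (hp3 : 3 ≤ p) (g h : TreeAut p) (hg : InN p b c g) (hh : InN p b c h)
    (x y : Fin p) : InN p b c (((g * h).sect x).sect y) := by
  have hbn := b_perm_nil hd
  have hcn := c_perm_nil hd
  obtain ⟨i, rfl | rfl | rfl⟩ := hg <;> obtain ⟨j, rfl | rfl | rfl⟩ := hh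
  · rw [← pow_add]
    exact inN_sect hd _ (inN_sect hd _ (inN_rot _) x) y
  · obtain ⟨z, hz⟩ := sect_rot_mul i (b ^ j) x
    rw [hz]
    exact inN_sect hd _ (inN_sect hd _ (inN_b j) z) y
  · obtain ⟨z, hz⟩ := sect_rot_mul i (c ^ j) x
    rw [hz]
    exact inN_sect hd _ (inN_sect hd _ (inN_c j) z) y
  · rw [sect_mul_rot]
    exact inN_sect hd _ (inN_sect hd _ (inN_b i) x) y
  · rw [← pow_add]
    exact inN_sect hd _ (inN_sect hd _ (inN_b _) x) y
  · -- b^i * c^j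
    rw [sect_mul_of_fix _ _ (perm_nil_pow b hbn i) x, b_pow_sect hd, c_pow_sect hd]
    by_cases hx : x = ((p - 1 : ℕ) : Fin p)
    · obtain ⟨m, hm⟩ := c_sect_of_ne hd ((p - 1 : ℕ) : Fin p) (last_ne_zero hp3)
      rw [hx, b_sect_last hd, hm, ← pow_mul, sect_mul_rot]
      exact inN_sect hd _ (inN_b i) y
    · obtain ⟨m, hm⟩ := b_sect_of_ne hd x hx
      rw [hm, ← pow_mul]
      by_cases hx0 : x = 0
      · rw [hx0, c_sect_zero hd]
        obtain ⟨z, hz⟩ := sect_rot_mul (m * i) (c ^ j) y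
        rw [hz]
        exact inN_sect hd _ (inN_c j) z
      · obtain ⟨m', hm'⟩ := c_sect_of_ne hd x hx0
        rw [hm', ← pow_mul, ← pow_add]
        exact inN_sect hd _ (inN_rot _) y
  · rw [sect_mul_rot]
    exact inN_sect hd _ (inN_sect hd _ (inN_c i) x) y
  · -- c^i * b^j
    rw [sect_mul_of_fix _ _ (perm_nil_pow c hcn i) x, b_pow_sect hd, c_pow_sect hd]
    by_cases hx0 : x = 0
    · obtain ⟨m, hm⟩ := b_sect_of_ne hd 0 (zero_ne_last hp3)
      rw [hx0, c_sect_zero hd, hm, ← pow_mul, sect_mul_rot]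
      exact inN_sect hd _ (inN_c i) y
    · obtain ⟨m, hm⟩ := c_sect_of_ne hd x hx0
      rw [hm, ← pow_mul]
      by_cases hx : x = ((p - 1 : ℕ) : Fin p)
      · rw [hx, b_sect_last hd]
        obtain ⟨z, hz⟩ := sect_rot_mul (m * i) (b ^ j) y
        rw [hz]
        exact inN_sect hd _ (inN_b j) z
      · obtain ⟨m', hm'⟩ := b_sect_of_ne hd x hx
        rw [hm', ← pow_mul, ← pow_add]
        exact inN_sect hd _ (inN_rot _) y
  · rw [← pow_add]
    exact inN_sect hd _ (inN_sect hd _ (inN_c _) x) y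

omit hd in
theorem zmod_nat_inj (hp3 : 3 ≤ p) {i j : ℕ} (hi : i ≤ p - 1) (hj : j ≤ p - 1)
    (h : (i : ZMod p) = (j : ZMod p)) : i = j := by
  rw [ZMod.natCast_eq_natCast_iff] at h
  have h2 : i % p = j % p := h
  rw [Nat.mod_eq_of_lt (by omega), Nat.mod_eq_of_lt (by omega)] at h2
  exact h2

theorem b_pow_sect_last (j : ℕ) : (b ^ j).sect ((p - 1 : ℕ) : Fin p) = b ^ j := by
  rw [b_pow_sect hd, b_sect_last hd]

theorem c_pow_sect_zero (j : ℕ) : (c ^ j).sect 0 = c ^ j := by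
  rw [c_pow_sect hd, c_sect_zero hd]

theorem b_pow_inj {n₀ : Fin (p - 1)} (hn₀ : e n₀ ≠ 0) {s t : ℕ} (h : b ^ s = b ^ t) :
    (s : ZMod p) = (t : ZMod p) := by
  have h2 := congrArg (fun g : TreeAut p => g.sect ((n₀.val : ℕ) : Fin p)) h
  simp only [b_pow_sect hd, hd.2.2.2.1 n₀, ← pow_mul] at h2
  have h3 := rot_pow_inj h2
  push_cast at h3
  rw [ZMod.natCast_val, ZMod.cast_id] at h3
  exact mul_left_cancel₀ hn₀ h3

theorem c_pow_inj {n₀ : Fin (p - 1)} (hn₀ : e n₀ ≠ 0) {s t : ℕ} (h : c ^ s = c ^ t) :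
    (s : ZMod p) = (t : ZMod p) := by
  have h2 := congrArg (fun g : TreeAut p => g.sect ((n₀.val + 1 : ℕ) : Fin p)) h
  simp only [c_pow_sect hd, hd.2.2.2.2.2.2 n₀, ← pow_mul] at h2
  have h3 := rot_pow_inj h2
  push_cast at h3
  rw [ZMod.natCast_val, ZMod.cast_id] at h3
  exact mul_left_cancel₀ hn₀ h3

theorem b_pow_eq_rot {n₀ : Fin (p - 1)} (hn₀ : e n₀ ≠ 0) {s t : ℕ}
    (h : b ^ s = rot p ^ t) : (s : ZMod p) = 0 := by
  have h2 := congrArg (fun g : TreeAut p => g.sect ((p - 1 : ℕ) : Fin p)) h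
  simp only [b_pow_sect_last hd, rot_pow_sect] at h2
  have h3 : b ^ s = b ^ 0 := by rw [pow_zero, h2]
  have := b_pow_inj hd hn₀ h3
  simpa using this

theorem c_pow_eq_rot {n₀ : Fin (p - 1)} (hn₀ : e n₀ ≠ 0) {s t : ℕ}
    (h : c ^ s = rot p ^ t) : (s : ZMod p) = 0 := by
  have h2 := congrArg (fun g : TreeAut p => g.sect 0) h
  simp only [c_pow_sect_zero hd, rot_pow_sect] at h2
  have h3 : c ^ s = c ^ 0 := by rw [pow_zero, h2]
  have := c_pow_inj hd hn₀ h3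
  simpa using this

theorem b_pow_eq_c_pow (hp3 : 3 ≤ p) {n₀ : Fin (p - 1)} (hn₀ : e n₀ ≠ 0) {s t : ℕ}
    (h : b ^ s = c ^ t) : (s : ZMod p) = 0 := by
  obtain ⟨m, hm⟩ := c_sect_of_ne hd ((p - 1 : ℕ) : Fin p) (last_ne_zero hp3)
  have h2 := congrArg (fun g : TreeAut p => g.sect ((p - 1 : ℕ) : Fin p)) h
  simp only [b_pow_sect_last hd, c_pow_sect hd, hm, ← pow_mul] at h2
  exact b_pow_eq_rot hd hn₀ h2

omit hd in
theorem rot_pow_eq_one_imp {s : ℕ} (h : rot p ^ s = 1) : (s : ZMod p) = 0 := by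
  have h2 : rot p ^ s = rot p ^ 0 := by rw [pow_zero, h]
  have := rot_pow_inj h2
  simpa using this

end EGSProof

end EGSMain

open Fin.NatCast in
/-- **Contracting property and nucleus of EGS-groups.** For a prime `p ≥ 3`, the
EGS-group `G_e = ⟨a, b, c⟩` defined by a non-zero vector `e ∈ (ℤ/pℤ)^{p-1}` is
contracting with nucleus
`N_e = {1} ∪ {a^i : 1 ≤ i ≤ p-1} ∪ {b^j : 1 ≤ j ≤ p-1} ∪ {c^k : 1 ≤ k ≤ p-1}`,
and `|N_e| = 3p - 2`. -/
theorem EGS_contracting_nucleus (p : ℕ) [Fact p.Prime] [NeZero p] (hp3 : 3 ≤ p)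
    (e : Fin (p - 1) → ZMod p) (b c : TreeAut p)
    (hdatum : IsEGSDatum p e b c) :
    IsNucleusOf p
      {g | g = 1 ∨ (∃ i, 1 ≤ i ∧ i ≤ p - 1 ∧ g = rot p ^ i) ∨
        (∃ i, 1 ≤ i ∧ i ≤ p - 1 ∧ g = b ^ i) ∨ (∃ i, 1 ≤ i ∧ i ≤ p - 1 ∧ g = c ^ i)}
      (EGSGroup p b c)
      {g | g = 1 ∨ (∃ i, 1 ≤ i ∧ i ≤ p - 1 ∧ g = rot p ^ i) ∨
        (∃ i, 1 ≤ i ∧ i ≤ p - 1 ∧ g = b ^ i) ∨ (∃ i, 1 ≤ i ∧ i ≤ p - 1 ∧ g = c ^ i)} ∧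
    ({g : TreeAut p | g = 1 ∨ (∃ i, 1 ≤ i ∧ i ≤ p - 1 ∧ g = rot p ^ i) ∨
        (∃ i, 1 ≤ i ∧ i ≤ p - 1 ∧ g = b ^ i) ∨
        (∃ i, 1 ≤ i ∧ i ≤ p - 1 ∧ g = c ^ i)}).ncard = 3 * p - 2 := by
  classical
  have hd := hdatum
  obtain ⟨n₀, hn₀⟩ : ∃ n₀, e n₀ ≠ 0 := Function.ne_iff.mp hd.1
  set NS : Set (TreeAut p) := {g | g = 1 ∨ (∃ i, 1 ≤ i ∧ i ≤ p - 1 ∧ g = rot p ^ i) ∨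
      (∃ i, 1 ≤ i ∧ i ≤ p - 1 ∧ g = b ^ i) ∨ (∃ i, 1 ≤ i ∧ i ≤ p - 1 ∧ g = c ^ i)} with hNS
  have hppos : 0 < p := by omega
  have hmem : ∀ g, g ∈ NS ↔ InN p b c g := by
    intro g
    rw [hNS]
    simp only [Set.mem_setOf_eq]
    constructor
    · rintro (rfl | ⟨i, _, _, rfl⟩ | ⟨i, _, _, rfl⟩ | ⟨i, _, _, rfl⟩)
      · exact EGSProof.inN_one
      · exact EGSProof.inN_rot i
      · exact EGSProof.inN_b i
      · exact EGSProof.inN_c i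
    · rintro ⟨i, rfl | rfl | rfl⟩
      · rw [rot_pow_mod]
        rcases Nat.eq_zero_or_pos (i % p) with h | h
        · rw [h, pow_zero]; exact Or.inl rfl
        · refine Or.inr (Or.inl ⟨i % p, h, ?_, rfl⟩)
          have := Nat.mod_lt i hppos
          omega
      · rw [pow_mod_of_pow_eq_one (EGSProof.b_pow_p hd)]
        rcases Nat.eq_zero_or_pos (i % p) with h | h
        · rw [h, pow_zero]; exact Or.inl rfl
        · refine Or.inr (Or.inr (Or.inl ⟨i % p, h, ?_, rfl⟩))
          have := Nat.mod_lt i hppos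
          omega
      · rw [pow_mod_of_pow_eq_one (EGSProof.c_pow_p hd)]
        rcases Nat.eq_zero_or_pos (i % p) with h | h
        · rw [h, pow_zero]; exact Or.inl rfl
        · refine Or.inr (Or.inr (Or.inr ⟨i % p, h, ?_, rfl⟩))
          have := Nat.mod_lt i hppos
          omega
  -- the finset
  set F : Finset (TreeAut p) := insert 1 (((Finset.Icc 1 (p - 1)).image fun i => rot p ^ i) ∪
      ((Finset.Icc 1 (p - 1)).image fun i => b ^ i) ∪
      ((Finset.Icc 1 (p - 1)).image fun i => c ^ i)) with hF
  have hNF : NS = ↑F := by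
    ext g
    rw [hNS, Set.mem_setOf_eq, hF]
    simp only [Finset.coe_insert, Set.mem_insert_iff, Finset.coe_union, Set.mem_union,
      Finset.coe_image, Set.mem_image, Finset.mem_coe, Finset.mem_Icc]
    constructor
    · rintro (rfl | ⟨i, h1, h2, rfl⟩ | ⟨i, h1, h2, rfl⟩ | ⟨i, h1, h2, rfl⟩)
      · exact Or.inl rfl
      · exact Or.inr (Or.inl (Or.inl ⟨i, ⟨h1, h2⟩, rfl⟩))
      · exact Or.inr (Or.inl (Or.inr ⟨i, ⟨h1, h2⟩, rfl⟩))
      · exact Or.inr (Or.inr ⟨i, ⟨h1, h2⟩, rfl⟩)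
    · rintro (rfl | (⟨i, ⟨h1, h2⟩, rfl⟩ | ⟨i, ⟨h1, h2⟩, rfl⟩) | ⟨i, ⟨h1, h2⟩, rfl⟩)
      · exact Or.inl rfl
      · exact Or.inr (Or.inl ⟨i, h1, h2, rfl⟩)
      · exact Or.inr (Or.inr (Or.inl ⟨i, h1, h2, rfl⟩))
      · exact Or.inr (Or.inr (Or.inr ⟨i, h1, h2, rfl⟩))
  -- basic non-equalities
  have hbrot : ∀ s t : ℕ, 1 ≤ s → s ≤ p - 1 → b ^ s ≠ rot p ^ t := by
    intro s t h1 h2 h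
    have h3 := EGSProof.b_pow_eq_rot hd hn₀ h
    have h4 : s = 0 := EGSProof.zmod_nat_inj hp3 h2 (by omega) (by simpa using h3)
    omega
  have hcrot : ∀ s t : ℕ, 1 ≤ s → s ≤ p - 1 → c ^ s ≠ rot p ^ t := by
    intro s t h1 h2 h
    have h3 := EGSProof.c_pow_eq_rot hd hn₀ h
    have h4 : s = 0 := EGSProof.zmod_nat_inj hp3 h2 (by omega) (by simpa using h3)
    omega
  have hbc : ∀ s t : ℕ, 1 ≤ s → s ≤ p - 1 → b ^ s ≠ c ^ t := by
    intro s t h1 h2 h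
    have h3 := EGSProof.b_pow_eq_c_pow hd hp3 hn₀ h
    have h4 : s = 0 := EGSProof.zmod_nat_inj hp3 h2 (by omega) (by simpa using h3)
    omega
  have hrot1 : ∀ s : ℕ, 1 ≤ s → s ≤ p - 1 → rot p ^ s ≠ 1 := by
    intro s h1 h2 h
    have h3 := EGSProof.rot_pow_eq_one_imp (p := p) h
    have h4 : s = 0 := EGSProof.zmod_nat_inj hp3 h2 (by omega) (by simpa using h3)
    omega
  have hb1 : ∀ s : ℕ, 1 ≤ s → s ≤ p - 1 → b ^ s ≠ 1 := by
    intro s h1 h2 h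
    exact hbrot s 0 h1 h2 (by rw [h, pow_zero])
  have hc1 : ∀ s : ℕ, 1 ≤ s → s ≤ p - 1 → c ^ s ≠ 1 := by
    intro s h1 h2 h
    exact hcrot s 0 h1 h2 (by rw [h, pow_zero])
  -- cardinality of F
  have hIcc : (Finset.Icc 1 (p - 1)).card = p - 1 := by rw [Nat.card_Icc]; omega
  have hmemIcc : ∀ i ∈ (Finset.Icc 1 (p - 1) : Finset ℕ), 1 ≤ i ∧ i ≤ p - 1 := by
    intro i hi; exact Finset.mem_Icc.mp hi
  have hinj_rot : Set.InjOn (fun i => rot p ^ i) ↑(Finset.Icc 1 (p - 1)) := by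
    intro i hi j hj hij
    simp only [Finset.coe_Icc, Set.mem_Icc] at hi hj
    exact EGSProof.zmod_nat_inj hp3 hi.2 hj.2 (rot_pow_inj hij)
  have hinj_b : Set.InjOn (fun i => b ^ i) ↑(Finset.Icc 1 (p - 1)) := by
    intro i hi j hj hij
    simp only [Finset.coe_Icc, Set.mem_Icc] at hi hj
    exact EGSProof.zmod_nat_inj hp3 hi.2 hj.2 (EGSProof.b_pow_inj hd hn₀ hij)
  have hinj_c : Set.InjOn (fun i => c ^ i) ↑(Finset.Icc 1 (p - 1)) := by
    intro i hi j hj hij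
    simp only [Finset.coe_Icc, Set.mem_Icc] at hi hj
    exact EGSProof.zmod_nat_inj hp3 hi.2 hj.2 (EGSProof.c_pow_inj hd hn₀ hij)
  have hdisj_ab : Disjoint ((Finset.Icc 1 (p - 1)).image fun i => rot p ^ i)
      ((Finset.Icc 1 (p - 1)).image fun i => b ^ i) := by
    rw [Finset.disjoint_left]
    rintro g hg hg'
    simp only [Finset.mem_image, Finset.mem_Icc] at hg hg'
    obtain ⟨i, ⟨hi1, hi2⟩, rfl⟩ := hg
    obtain ⟨j, ⟨hj1, hj2⟩, hj⟩ := hg'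
    exact hbrot j i hj1 hj2 hj
  have hdisj_ac : Disjoint ((Finset.Icc 1 (p - 1)).image fun i => rot p ^ i)
      ((Finset.Icc 1 (p - 1)).image fun i => c ^ i) := by
    rw [Finset.disjoint_left]
    rintro g hg hg'
    simp only [Finset.mem_image, Finset.mem_Icc] at hg hg'
    obtain ⟨i, ⟨hi1, hi2⟩, rfl⟩ := hg
    obtain ⟨j, ⟨hj1, hj2⟩, hj⟩ := hg'
    exact hcrot j i hj1 hj2 hj
  have hdisj_bc : Disjoint ((Finset.Icc 1 (p - 1)).image fun i => b ^ i)
      ((Finset.Icc 1 (p - 1)).image fun i => c ^ i) := by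
    rw [Finset.disjoint_left]
    rintro g hg hg'
    simp only [Finset.mem_image, Finset.mem_Icc] at hg hg'
    obtain ⟨i, ⟨hi1, hi2⟩, rfl⟩ := hg
    obtain ⟨j, ⟨hj1, hj2⟩, hj⟩ := hg'
    exact hbc i j hi1 hi2 hj.symm
  have hone_not : (1 : TreeAut p) ∉ ((Finset.Icc 1 (p - 1)).image fun i => rot p ^ i) ∪
      ((Finset.Icc 1 (p - 1)).image fun i => b ^ i) ∪
      ((Finset.Icc 1 (p - 1)).image fun i => c ^ i) := by
    simp only [Finset.mem_union, Finset.mem_image, Finset.mem_Icc, not_or]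
    refine ⟨⟨?_, ?_⟩, ?_⟩
    · rintro ⟨i, ⟨h1, h2⟩, h⟩; exact hrot1 i h1 h2 h
    · rintro ⟨i, ⟨h1, h2⟩, h⟩; exact hb1 i h1 h2 h
    · rintro ⟨i, ⟨h1, h2⟩, h⟩; exact hc1 i h1 h2 h
  have hcardF : F.card = 3 * p - 2 := by
    rw [hF, Finset.card_insert_of_notMem hone_not,
      Finset.card_union_of_disjoint (Finset.disjoint_union_left.mpr ⟨hdisj_ac, hdisj_bc⟩),
      Finset.card_union_of_disjoint hdisj_ab,
      Finset.card_image_of_injOn hinj_rot, Finset.card_image_of_injOn hinj_b,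
      Finset.card_image_of_injOn hinj_c, hIcc]
    omega
  constructor
  · refine ⟨⟨?_, ?_, 2, by norm_num, ?_⟩, ?_⟩
    · -- NS ⊆ G
      intro g hg
      rw [hmem] at hg
      obtain ⟨i, rfl | rfl | rfl⟩ := hg
      · exact pow_mem (rot_mem_EGS p b c) i
      · exact pow_mem (b_mem_EGS p b c) i
      · exact pow_mem (c_mem_EGS p b c) i
    · exact hNF ▸ F.finite_toSet
    · -- quasinucleus with k = 2
      intro n₁ h₁ n₂ h₂ v hv
      rw [Set.union_self, hmem] at h₁ h₂
      rw [hmem]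
      obtain ⟨x, y, rfl⟩ := List.length_eq_two.mp hv
      exact EGSProof.key hd hp3 _ _ h₁ h₂ x y
    · -- minimality
      rintro N' hN'sub hN'fin ⟨k, hk1, hk⟩ g hg
      rw [hmem] at hg
      have h1S : (1 : TreeAut p) ∈ NS ∪ N' := Or.inl ((hmem 1).mpr EGSProof.inN_one)
      have hone : (1 : TreeAut p) ∈ N' := by
        have := hk 1 h1S 1 h1S (List.replicate k 0) (by simp)
        rwa [mul_one, sectV_one] at this
      obtain ⟨i, rfl | rfl | rfl⟩ := hg
      · -- rot p ^ i
        by_cases hi0 : (i : ZMod p) = 0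
        · have hmod : i % p = 0 := by
            have : (i : ZMod p) = ((0 : ℕ) : ZMod p) := by simpa using hi0
            rw [ZMod.natCast_eq_natCast_iff] at this
            have h2 : i % p = 0 % p := this
            simpa using h2
          rw [rot_pow_mod, hmod, pow_zero]
          exact hone
        · set u : ZMod p := (i : ZMod p) * (e n₀)⁻¹ with hu
          have hu0 : u ≠ 0 := mul_ne_zero hi0 (inv_ne_zero hn₀)
          set j : ℕ := u.val with hj
          have hj0 : j ≠ 0 := fun h => hu0 ((ZMod.val_eq_zero u).mp h)
          have hjle : j ≤ p - 1 := by
            have := ZMod.val_lt u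
            omega
          have hbjS : b ^ j ∈ NS ∪ N' := Or.inl ((hmem _).mpr (EGSProof.inN_b j))
          set v : List (Fin p) := List.replicate (k - 1) ((p - 1 : ℕ) : Fin p) ++
            [((n₀.val : ℕ) : Fin p)] with hv
          have hlen : v.length = k := by
            rw [hv, List.length_append, List.length_replicate]
            simp
            omega
          have hcalc : (b ^ j * 1).sectV v = rot p ^ i := by
            rw [mul_one, hv, sectV_append,
              sectV_replicate _ _ (EGSProof.b_pow_sect_last hd j), sectV_cons,
              EGSProof.b_pow_sect hd, hd.2.2.2.1 n₀, ← pow_mul]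
            show rot p ^ ((e n₀).val * j) = rot p ^ i
            rw [rot_pow_eq_iff]
            push_cast
            rw [ZMod.natCast_val, ZMod.cast_id, hj, ZMod.natCast_val, ZMod.cast_id, hu,
              mul_comm (i : ZMod p) (e n₀)⁻¹, ← mul_assoc, mul_inv_cancel₀ hn₀, one_mul]
          have := hk (b ^ j) hbjS 1 h1S v hlen
          rwa [hcalc] at this
      · -- b ^ i
        have hbiS : b ^ i ∈ NS ∪ N' := Or.inl ((hmem _).mpr (EGSProof.inN_b i))
        have := hk (b ^ i) hbiS 1 h1S (List.replicate k ((p - 1 : ℕ) : Fin p)) (by simp)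
        rwa [mul_one, sectV_replicate _ _ (EGSProof.b_pow_sect_last hd i)] at this
      · -- c ^ i
        have hciS : c ^ i ∈ NS ∪ N' := Or.inl ((hmem _).mpr (EGSProof.inN_c i))
        have := hk (c ^ i) hciS 1 h1S (List.replicate k (0 : Fin p)) (by simp)
        rwa [mul_one, sectV_replicate _ _ (EGSProof.c_pow_sect_zero hd i)] at this
  · rw [hNF, Set.ncard_coe_finset, hcardF]
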